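/- Let g : ℝ → ℝ be defined by g(x) = |x| + log(1 + |x|), and for a function w : ℝ → ℝ let Δ_w(x, y) := 2·w(x) + w(y) − w(2x + y). Then Δ_g(x, y) ≥ log(9/8) for all (x, y) ∈ ℝ² with |x| ≥ 1/2. -/

import Mathlib

theorem Delta_g_ge_C (g : ℝ → ℝ) (hg : ∀ x : ℝ, g x = |x| + Real.log (1 + |x|))
    (Δg : ℝ → ℝ → ℝ) (hΔ : ∀ x y : ℝ, Δg x y = 2 * g x + g y - g (2 * x + y)) :
    ∀ x y : ℝ, 1 / 2 ≤ |x| → Δg x y ≥ Real.log (9 / 8) := by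
  intro x y hx
  set u := |x| with hu
  set v := |y| with hv
  set s := |2 * x + y| with hs
  have hv0 : 0 ≤ v := abs_nonneg y
  have hs0 : 0 ≤ s := abs_nonneg _
  have htri : s ≤ 2 * u + v := by
    calc s ≤ |2 * x| + |y| := abs_add_le _ _
    _ = 2 * u + v := by rw [abs_mul]; norm_num; rfl
  set a := 2 * u + v - s with ha
  have ha0 : 0 ≤ a := by simp [ha]; linarith
  have hu1 : (0:ℝ) < 1 + u := by linarith
  have hv1 : (0:ℝ) < 1 + v := by linarith
  have hs1 : (0:ℝ) < 1 + s := by linarith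
  have ha1 : (0:ℝ) < 1 + a := by linarith
  rw [hΔ, hg, hg, hg]
  -- Δ = a + 2 log(1+u) + log(1+v) - log(1+s)
  have hloga : Real.log (1 + a) ≤ a := by
    have := Real.log_le_sub_one_of_pos ha1
    linarith
  have key : (9:ℝ)/8 * (1 + s) ≤ (1 + a) * (1 + u)^2 * (1 + v) := by
    have hsa : s = 2 * u + v - a := by rw [ha]; ring
    rw [hsa]
    nlinarith [mul_nonneg (mul_nonneg ha0 (sq_nonneg (1+u))) hv1.le,
      mul_nonneg hv0 (by nlinarith : (0:ℝ) ≤ u * (2 + u) - 1/8),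
      sq_nonneg (2*u - 1), mul_nonneg ha0 hv0, mul_nonneg ha0 (by linarith : (0:ℝ) ≤ u)]
  have hlogkey : Real.log (9/8) ≤ Real.log (1+a) + 2 * Real.log (1+u) + Real.log (1+v) - Real.log (1+s) := by
    have h1 : Real.log ((9:ℝ)/8 * (1+s)) ≤ Real.log ((1+a) * (1+u)^2 * (1+v)) :=
      Real.log_le_log (by positivity) key
    rw [Real.log_mul (by norm_num) hs1.ne', Real.log_mul (by positivity) hv1.ne',
      Real.log_mul ha1.ne' (by positivity), Real.log_pow] at h1
    push_cast at h1
    linarith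
  linarith
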